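/- Let T, T̂ ∈ ℝ^{k×k} be symmetric matrices, let γ > 0, and set Err_T := ‖T̂ − T‖₂/γ. Assume Err_T ≤ 1/4 and that the eigenvalues λ̂_1,…,λ̂_k of T̂ satisfy min( {|λ̂_i − λ̂_j| : i ≠ j} ∪ {|λ̂_i| : i ∈ [k]} ) ≥ γ − 2·Err_T·γ. Let {(v_i, λ_i)} and {(v̂_i, λ̂_i)} be orthonormal eigenvector/eigenvalue pairs of T and T̂ respectively. Then there is a permutation π of [k] and signs s_1,…,s_k ∈ {±1} such that for all i ∈ [k]: ‖v_i − s_i·v̂_{π(i)}‖₂ ≤ 4√2·Err_T and |λ_i − λ̂_{π(i)}| ≤ Err_T·γ. -/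

import Mathlib

open Matrix
open scoped BigOperators

/-- Euclidean (ℓ²) norm of a vector in `Fin m → ℝ`. -/
noncomputable def l2norm {m : ℕ} (v : Fin m → ℝ) : ℝ :=
  Real.sqrt (∑ i, v i ^ 2)

/-- Spectral norm (ℓ² operator norm) of a real matrix. -/
noncomputable def spec {m n : ℕ} (M : Matrix (Fin m) (Fin n) ℝ) : ℝ :=
  ‖LinearMap.toContinuousLinearMap (Matrix.toEuclideanLin M)‖

/-- Gap statistic: minimum over pairwise eigenvalue gaps and absolute eigenvalues. -/
noncomputable def gapStat {k : ℕ} (lam : Fin k → ℝ) : ℝ :=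
  sInf ({a | ∃ i j, i ≠ j ∧ a = |lam i - lam j|} ∪ {a | ∃ i, a = |lam i|})

section Aux

variable {k : ℕ}

lemma sum_dot {ι : Type*} {m : ℕ} (s : Finset ι) (f : ι → Fin m → ℝ) (y : Fin m → ℝ) :
    (∑ i ∈ s, f i) ⬝ᵥ y = ∑ i ∈ s, f i ⬝ᵥ y := by
  simp only [dotProduct, Finset.sum_apply, Finset.sum_mul]
  exact Finset.sum_comm

lemma l2norm_nonneg {m : ℕ} (x : Fin m → ℝ) : 0 ≤ l2norm x := Real.sqrt_nonneg _

lemma l2norm_sq {m : ℕ} (x : Fin m → ℝ) : l2norm x ^ 2 = ∑ i, x i ^ 2 := by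
  rw [l2norm, Real.sq_sqrt]
  positivity

lemma l2norm_eq_norm {m : ℕ} (x : Fin m → ℝ) :
    l2norm x = ‖(WithLp.equiv 2 (Fin m → ℝ)).symm x‖ := by
  rw [EuclideanSpace.norm_eq]
  simp [l2norm, Real.norm_eq_abs, sq_abs]

lemma spec_bound {m n : ℕ} (M : Matrix (Fin m) (Fin n) ℝ) (x : Fin n → ℝ) :
    l2norm (M *ᵥ x) ≤ spec M * l2norm x := by
  have h := (LinearMap.toContinuousLinearMap (Matrix.toEuclideanLin M)).le_opNorm
    ((WithLp.equiv 2 (Fin n → ℝ)).symm x)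
  simpa [spec, l2norm_eq_norm, Matrix.toEuclideanLin_apply_piLp_toLp, WithLp.equiv_symm_apply] using h

lemma spec_sub_comm {m n : ℕ} (A B : Matrix (Fin m) (Fin n) ℝ) :
    spec (A - B) = spec (B - A) := by
  unfold spec
  rw [show A - B = -(B - A) from (neg_sub B A).symm, map_neg, map_neg, norm_neg]

lemma dot_le_l2 {m : ℕ} (x y : Fin m → ℝ) : x ⬝ᵥ y ≤ l2norm x * l2norm y := by
  have h := Finset.sum_mul_sq_le_sq_mul_sq Finset.univ x y
  calc x ⬝ᵥ y ≤ |∑ i, x i * y i| := le_abs_self _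
    _ = Real.sqrt ((∑ i, x i * y i) ^ 2) := (Real.sqrt_sq_eq_abs _).symm
    _ ≤ Real.sqrt ((∑ i, x i ^ 2) * ∑ i, y i ^ 2) := Real.sqrt_le_sqrt h
    _ = l2norm x * l2norm y := by
        rw [l2norm, l2norm, ← Real.sqrt_mul (by positivity)]

lemma complete_rel (u : Fin k → Fin k → ℝ)
    (h : ∀ i j, u i ⬝ᵥ u j = if i = j then (1 : ℝ) else 0) (a b : Fin k) :
    ∑ l, u l a * u l b = if a = b then (1 : ℝ) else 0 := by
  let U : Matrix (Fin k) (Fin k) ℝ := Matrix.of u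
  have h1 : U * Uᵀ = 1 := by
    ext i j
    simpa [U, Matrix.mul_apply, dotProduct, Matrix.one_apply] using h i j
  have h2 : Uᵀ * U = 1 := mul_eq_one_comm.mp h1
  have h3 := congrFun (congrFun h2 a) b
  simpa [U, Matrix.mul_apply, Matrix.one_apply] using h3

lemma dot_expand (u : Fin k → Fin k → ℝ)
    (h : ∀ i j, u i ⬝ᵥ u j = if i = j then (1 : ℝ) else 0) (x y : Fin k → ℝ) :
    x ⬝ᵥ y = ∑ l, (x ⬝ᵥ u l) * (y ⬝ᵥ u l) := by
  have key := complete_rel u h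
  symm
  have e1 : ∀ l, (x ⬝ᵥ u l) * (y ⬝ᵥ u l) = ∑ a, ∑ b, x a * y b * (u l a * u l b) := by
    intro l
    rw [dotProduct, dotProduct, Finset.sum_mul_sum]
    exact Finset.sum_congr rfl fun a _ => Finset.sum_congr rfl fun b _ => by ring
  calc ∑ l, (x ⬝ᵥ u l) * (y ⬝ᵥ u l)
      = ∑ l, ∑ a, ∑ b, x a * y b * (u l a * u l b) := Finset.sum_congr rfl fun l _ => e1 l
    _ = ∑ a, ∑ l, ∑ b, x a * y b * (u l a * u l b) := Finset.sum_comm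
    _ = ∑ a, ∑ b, x a * y b * ∑ l, u l a * u l b := by
        refine Finset.sum_congr rfl fun a _ => ?_
        rw [Finset.sum_comm]
        exact Finset.sum_congr rfl fun b _ => by rw [Finset.mul_sum]
    _ = ∑ a, ∑ b, x a * y b * (if a = b then (1:ℝ) else 0) := by simp_rw [key]
    _ = ∑ a, x a * y a := by
        refine Finset.sum_congr rfl fun a _ => ?_
        simp [mul_ite, Finset.sum_ite_eq]
    _ = x ⬝ᵥ y := rfl

lemma parseval (u : Fin k → Fin k → ℝ)
    (h : ∀ i j, u i ⬝ᵥ u j = if i = j then (1 : ℝ) else 0) (x : Fin k → ℝ) :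
    ∑ l, (x ⬝ᵥ u l) ^ 2 = ∑ t, x t ^ 2 := by
  have h2 := dot_expand u h x x
  simp only [dotProduct, ← sq] at h2
  simpa [dotProduct] using h2.symm

lemma eig_dot (M : Matrix (Fin k) (Fin k) ℝ) (hM : Mᵀ = M) (u : Fin k → ℝ) (μ : ℝ)
    (hu : M *ᵥ u = μ • u) (x : Fin k → ℝ) : (M *ᵥ x) ⬝ᵥ u = μ * (x ⬝ᵥ u) := by
  have hMx : M *ᵥ x = x ᵥ* M := by
    calc M *ᵥ x = Mᵀ *ᵥ x := by rw [hM]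
      _ = x ᵥ* M := Matrix.mulVec_transpose M x
  rw [hMx, ← Matrix.dotProduct_mulVec, hu, dotProduct_smul, smul_eq_mul]

end Aux

lemma weyl_one {k : ℕ} (A B : Matrix (Fin k) (Fin k) ℝ) (hA : Aᵀ = A) (hB : Bᵀ = B)
    (u : Fin k → Fin k → ℝ) (α : Fin k → ℝ)
    (hu : ∀ i j, u i ⬝ᵥ u j = if i = j then (1 : ℝ) else 0)
    (hueig : ∀ i, A *ᵥ u i = α i • u i) (hαm : Monotone α)
    (w : Fin k → Fin k → ℝ) (β : Fin k → ℝ)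
    (hw : ∀ i j, w i ⬝ᵥ w j = if i = j then (1 : ℝ) else 0)
    (hweig : ∀ i, B *ᵥ w i = β i • w i) (hβm : Monotone β)
    (a : Fin k) : α a ≤ β a + spec (A - B) := by
  classical
  -- linear independence of orthonormal families
  have li : ∀ (z : Fin k → Fin k → ℝ),
      (∀ i j, z i ⬝ᵥ z j = if i = j then (1 : ℝ) else 0) → LinearIndependent ℝ z := by
    intro z hz
    rw [Fintype.linearIndependent_iff]
    intro g hg j
    have := congrArg (· ⬝ᵥ z j) hg
    simpa [sum_dot, smul_dotProduct, hz, Finset.sum_ite_eq'] using this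
  have liu := li u hu
  have liw := li w hw
  -- subspaces
  set V : Submodule ℝ (Fin k → ℝ) :=
    Submodule.span ℝ (Set.range (fun b : {b : Fin k // a ≤ b} => u b)) with hV
  set W : Submodule ℝ (Fin k → ℝ) :=
    Submodule.span ℝ (Set.range (fun b : {b : Fin k // b ≤ a} => w b)) with hW
  have hVrank : Module.finrank ℝ V = k - a := by
    have h := finrank_span_eq_card (liu.comp ((↑) : {b : Fin k // a ≤ b} → Fin k) Subtype.val_injective)
    simp only [Function.comp_def] at h
    rw [hV, h]
    rw [Fintype.card_congr (Equiv.subtypeEquivRight (fun b => Iff.rfl) :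
      {b : Fin k // a ≤ b} ≃ {b : Fin k // b ∈ Set.Ici a})]
    rw [← Set.toFinset_card, Set.toFinset_Ici]; exact Fin.card_Ici a
  have hWrank : Module.finrank ℝ W = (a : ℕ) + 1 := by
    have h := finrank_span_eq_card (liw.comp ((↑) : {b : Fin k // b ≤ a} → Fin k) Subtype.val_injective)
    simp only [Function.comp_def] at h
    rw [hW, h]
    rw [Fintype.card_congr (Equiv.subtypeEquivRight (fun b => Iff.rfl) :
      {b : Fin k // b ≤ a} ≃ {b : Fin k // b ∈ Set.Iic a})]
    rw [← Set.toFinset_card, Set.toFinset_Iic]; exact Fin.card_Iic a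
  -- nontrivial intersection
  have hinf : V ⊓ W ≠ ⊥ := by
    intro hbot
    have h1 := Submodule.finrank_sup_add_finrank_inf_eq V W
    have h2 : Module.finrank ℝ ↥(V ⊔ W) ≤ k := by
      have := Submodule.finrank_le (V ⊔ W)
      simpa [Module.finrank_pi] using this
    rw [hbot] at h1
    simp only [finrank_bot, add_zero] at h1
    have ha := a.isLt
    omega
  obtain ⟨x, hxVW, hx0⟩ := Submodule.exists_mem_ne_zero_of_ne_bot hinf
  have hxV : x ∈ V := hxVW.1
  have hxW : x ∈ W := hxVW.2
  -- vanishing coefficients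
  have hcu : ∀ b : Fin k, b < a → x ⬝ᵥ u b = 0 := by
    intro b hb
    rw [hV, Submodule.mem_span_range_iff_exists_fun] at hxV
    obtain ⟨c, hc⟩ := hxV
    rw [← hc, sum_dot]
    refine Finset.sum_eq_zero fun i _ => ?_
    rw [smul_dotProduct, hu, if_neg (by rintro rfl; exact absurd i.2 (not_le.mpr hb)),
      smul_zero]
  have hcw : ∀ b : Fin k, a < b → x ⬝ᵥ w b = 0 := by
    intro b hb
    rw [hW, Submodule.mem_span_range_iff_exists_fun] at hxW
    obtain ⟨c, hc⟩ := hxW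
    rw [← hc, sum_dot]
    refine Finset.sum_eq_zero fun i _ => ?_
    rw [smul_dotProduct, hw, if_neg (by rintro rfl; exact absurd i.2 (not_le.mpr hb)),
      smul_zero]
  -- quadratic forms
  set S : ℝ := ∑ t, x t ^ 2 with hS
  have hSpos : 0 < S := by
    have : ∃ t, x t ≠ 0 := by
      by_contra hc; push_neg at hc; exact hx0 (funext hc)
    obtain ⟨t, ht⟩ := this
    exact Finset.sum_pos' (fun i _ => sq_nonneg _) ⟨t, Finset.mem_univ t, by positivity⟩
  have quadA : α a * S ≤ (A *ᵥ x) ⬝ᵥ x := by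
    have e : (A *ᵥ x) ⬝ᵥ x = ∑ l, α l * (x ⬝ᵥ u l) ^ 2 := by
      rw [dot_expand u hu (A *ᵥ x) x]
      exact Finset.sum_congr rfl fun l _ => by rw [eig_dot A hA (u l) (α l) (hueig l) x]; ring
    rw [e, hS, ← parseval u hu x, Finset.mul_sum]
    refine Finset.sum_le_sum fun l _ => ?_
    rcases lt_or_ge l a with hl | hl
    · rw [hcu l hl]; simp
    · have := hαm hl
      nlinarith [sq_nonneg (x ⬝ᵥ u l)]
  have quadB : (B *ᵥ x) ⬝ᵥ x ≤ β a * S := by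
    have e : (B *ᵥ x) ⬝ᵥ x = ∑ l, β l * (x ⬝ᵥ w l) ^ 2 := by
      rw [dot_expand w hw (B *ᵥ x) x]
      exact Finset.sum_congr rfl fun l _ => by rw [eig_dot B hB (w l) (β l) (hweig l) x]; ring
    rw [e, hS, ← parseval w hw x, Finset.mul_sum]
    refine Finset.sum_le_sum fun l _ => ?_
    rcases lt_or_ge a l with hl | hl
    · rw [hcw l hl]; simp
    · have := hβm hl
      nlinarith [sq_nonneg (x ⬝ᵥ w l)]
  have bridge : (A *ᵥ x) ⬝ᵥ x - (B *ᵥ x) ⬝ᵥ x ≤ spec (A - B) * S := by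
    have e : (A *ᵥ x) ⬝ᵥ x - (B *ᵥ x) ⬝ᵥ x = ((A - B) *ᵥ x) ⬝ᵥ x := by
      rw [Matrix.sub_mulVec, sub_dotProduct]
    rw [e]
    calc ((A - B) *ᵥ x) ⬝ᵥ x ≤ l2norm ((A - B) *ᵥ x) * l2norm x := dot_le_l2 _ _
      _ ≤ (spec (A - B) * l2norm x) * l2norm x := by
          have := spec_bound (A - B) x
          have h0 := l2norm_nonneg x
          nlinarith
      _ = spec (A - B) * S := by rw [mul_assoc, ← sq, l2norm_sq]
  have hspec0 : 0 ≤ spec (A - B) := norm_nonneg _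
  nlinarith

set_option maxHeartbeats 1000000

/-- **Accuracy of the eigendecomposition.**
Let `T, T̂` be symmetric `k×k` matrices, `γ > 0`, `Err_T := ‖T̂ − T‖₂/γ ≤ 1/4`, and
suppose the eigenvalues of `T̂` satisfy the gap condition
`min({|λ̂_i − λ̂_j| : i ≠ j} ∪ {|λ̂_i|}) ≥ γ − 2 Err_T γ`. If `{(v_i, λ_i)}` and
`{(v̂_i, λ̂_i)}` are orthonormal eigenvector/eigenvalue pairs of `T` and `T̂`, then
there is a permutation `π` and signs `s_i ∈ {±1}` with
`‖v_i − s_i v̂_{π i}‖₂ ≤ 4√2 Err_T` and `|λ_i − λ̂_{π i}| ≤ Err_T γ` for all `i`. -/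
theorem eigendecomposition_accuracy
    (k : ℕ)
    (T That : Matrix (Fin k) (Fin k) ℝ)
    (hT_sym : T.IsHermitian) (hThat_sym : That.IsHermitian)
    (γ : ℝ) (hγ : 0 < γ)
    (ErrT : ℝ) (hErrT : ErrT = spec (That - T) / γ) (hErrT14 : ErrT ≤ 1 / 4)
    -- orthonormal eigendecompositions of `T` and `T̂`
    (v : Fin k → Fin k → ℝ) (lam : Fin k → ℝ)
    (hv_orth : ∀ i j, v i ⬝ᵥ v j = if i = j then (1 : ℝ) else 0)
    (hv_eig : ∀ i, T *ᵥ v i = lam i • v i)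
    (vhat : Fin k → Fin k → ℝ) (lamhat : Fin k → ℝ)
    (hvhat_orth : ∀ i j, vhat i ⬝ᵥ vhat j = if i = j then (1 : ℝ) else 0)
    (hvhat_eig : ∀ i, That *ᵥ vhat i = lamhat i • vhat i)
    -- the eigenvalue-gap condition for `T̂`
    (hgap : γ - 2 * ErrT * γ ≤ gapStat lamhat) :
    ∃ (π : Equiv.Perm (Fin k)) (s : Fin k → ℝ),
      (∀ i, s i = 1 ∨ s i = -1) ∧
      (∀ i, l2norm (v i - s i • vhat (π i)) ≤ 4 * Real.sqrt 2 * ErrT) ∧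
      (∀ i, |lam i - lamhat (π i)| ≤ ErrT * γ) := by
  classical
  have hTt : Tᵀ = T := by
    ext i j
    have := congrFun (congrFun hT_sym.eq i) j
    simpa [Matrix.conjTranspose_apply] using this
  have hThatt : Thatᵀ = That := by
    ext i j
    have := congrFun (congrFun hThat_sym.eq i) j
    simpa [Matrix.conjTranspose_apply] using this
  set ε : ℝ := spec (That - T) with hε
  have hε0 : 0 ≤ ε := norm_nonneg _
  have hεE : ErrT * γ = ε := by rw [hErrT]; field_simp
  have hErrT0 : 0 ≤ ErrT := by
    rw [hErrT]; positivity
  have hε4 : ε ≤ γ / 4 := by nlinarith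
  -- the gap bound
  have gapLB : ∀ l j : Fin k, l ≠ j → γ - 2 * ε ≤ |lamhat l - lamhat j| := by
    intro l j hlj
    have hbdd : BddBelow ({a | ∃ i j, i ≠ j ∧ a = |lamhat i - lamhat j|} ∪
        {a | ∃ i, a = |lamhat i|}) := by
      refine ⟨0, ?_⟩
      rintro a (⟨i, j, -, rfl⟩ | ⟨i, rfl⟩) <;> positivity
    have hmem : |lamhat l - lamhat j| ∈ ({a | ∃ i j, i ≠ j ∧ a = |lamhat i - lamhat j|} ∪
        {a | ∃ i, a = |lamhat i|}) := Or.inl ⟨l, j, hlj, rfl⟩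
    have h1 : gapStat lamhat ≤ |lamhat l - lamhat j| := csInf_le hbdd hmem
    nlinarith [le_trans hgap h1]
  -- sorted Weyl inequality
  obtain ⟨σ, hmono1⟩ : ∃ σ : Equiv.Perm (Fin k), Monotone (lam ∘ σ) :=
    ⟨Tuple.sort lam, Tuple.monotone_sort lam⟩
  obtain ⟨τ, hmono2⟩ : ∃ τ : Equiv.Perm (Fin k), Monotone (lamhat ∘ τ) :=
    ⟨Tuple.sort lamhat, Tuple.monotone_sort lamhat⟩
  have orths : ∀ (z : Fin k → Fin k → ℝ) (e : Equiv.Perm (Fin k)),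
      (∀ i j, z i ⬝ᵥ z j = if i = j then (1 : ℝ) else 0) →
      (∀ i j, z (e i) ⬝ᵥ z (e j) = if i = j then (1 : ℝ) else 0) := by
    intro z e hz i j
    rw [hz]
    simp [Equiv.apply_eq_iff_eq]
  have w1 : ∀ a, lam (σ a) ≤ lamhat (τ a) + ε := by
    intro a
    have h := weyl_one T That hTt hThatt (fun b => v (σ b)) (fun b => lam (σ b))
      (orths v σ hv_orth) (fun b => hv_eig (σ b)) hmono1
      (fun b => vhat (τ b)) (fun b => lamhat (τ b))
      (orths vhat τ hvhat_orth) (fun b => hvhat_eig (τ b)) hmono2 a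
    rwa [spec_sub_comm, ← hε] at h
  have w2 : ∀ a, lamhat (τ a) ≤ lam (σ a) + ε := by
    intro a
    have h := weyl_one That T hThatt hTt (fun b => vhat (τ b)) (fun b => lamhat (τ b))
      (orths vhat τ hvhat_orth) (fun b => hvhat_eig (τ b)) hmono2
      (fun b => v (σ b)) (fun b => lam (σ b))
      (orths v σ hv_orth) (fun b => hv_eig (σ b)) hmono1 a
    rwa [← hε] at h
  have habs : ∀ a, |lam (σ a) - lamhat (τ a)| ≤ ε := by
    intro a
    rw [abs_le]
    constructor <;> [linarith [w2 a]; linarith [w1 a]]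
  -- the permutation
  refine ⟨σ.symm.trans τ, fun i => if 0 ≤ v i ⬝ᵥ vhat (τ (σ.symm i)) then 1 else -1,
    fun i => by dsimp only; split <;> simp, ?_, ?_⟩
  case _ =>
    -- eigenvector bounds
    intro i
    dsimp only
    simp only [Equiv.trans_apply]
    set j : Fin k := τ (σ.symm i) with hj
    have hij : |lam i - lamhat j| ≤ ε := by
      have := habs (σ.symm i)
      rwa [Equiv.apply_symm_apply] at this
    set c : Fin k → ℝ := fun l => v i ⬝ᵥ vhat l with hc
    have sumc : ∑ l, c l ^ 2 = 1 := by
      have h1 := parseval vhat hvhat_orth (v i)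
      have h2 := hv_orth i i
      rw [if_pos rfl] at h2
      calc ∑ l, c l ^ 2 = ∑ t, v i t ^ 2 := h1
        _ = v i ⬝ᵥ v i := by simp [dotProduct, sq]
        _ = 1 := h2
    set r : Fin k → ℝ := (That - T) *ᵥ v i with hr
    have hnvi : l2norm (v i) = 1 := by
      have h2 := hv_orth i i
      rw [if_pos rfl] at h2
      have h3 : ∑ t, v i t ^ 2 = 1 := by simpa [dotProduct, sq] using h2
      rw [l2norm, h3, Real.sqrt_one]
    have hrbound : ∑ t, r t ^ 2 ≤ ε ^ 2 := by
      have h1 := spec_bound (That - T) (v i)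
      rw [hnvi, mul_one, ← hε, ← hr] at h1
      have h2 := l2norm_sq r
      nlinarith [l2norm_nonneg r]
    have hrl : ∀ l, r ⬝ᵥ vhat l = (lamhat l - lam i) * c l := by
      intro l
      rw [hr, Matrix.sub_mulVec, sub_dotProduct,
        eig_dot That hThatt (vhat l) (lamhat l) (hvhat_eig l) (v i),
        hv_eig i, smul_dotProduct, smul_eq_mul, hc]
      ring
    have sumr : ∑ l, ((lamhat l - lam i) * c l) ^ 2 ≤ ε ^ 2 := by
      have h1 := parseval vhat hvhat_orth r
      calc ∑ l, ((lamhat l - lam i) * c l) ^ 2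
          = ∑ l, (r ⬝ᵥ vhat l) ^ 2 := by
            exact Finset.sum_congr rfl fun l _ => by rw [hrl l]
        _ = ∑ t, r t ^ 2 := h1
        _ ≤ ε ^ 2 := hrbound
    have tailsum : ∑ l ∈ Finset.univ.erase j, c l ^ 2 ≤ 16 * ErrT ^ 2 := by
      have key : ∀ l, l ≠ j → (γ / 4) ^ 2 * c l ^ 2 ≤ ((lamhat l - lam i) * c l) ^ 2 := by
        intro l hlj
        have h1 := gapLB l j hlj
        have h2 : |lamhat l - lamhat j| ≤ |lamhat l - lam i| + |lam i - lamhat j| := by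
          have := abs_sub_le (lamhat l) (lam i) (lamhat j)
          simpa [abs_sub_comm] using this
        have h3 : γ / 4 ≤ |lamhat l - lam i| := by linarith
        have h4 : (γ / 4) ^ 2 ≤ (lamhat l - lam i) ^ 2 := by
          rw [← sq_abs (lamhat l - lam i)]
          have : 0 ≤ γ / 4 := by linarith
          nlinarith
        nlinarith [sq_nonneg (c l)]
      have h5 : (γ / 4) ^ 2 * ∑ l ∈ Finset.univ.erase j, c l ^ 2 ≤
          ∑ l ∈ Finset.univ.erase j, ((lamhat l - lam i) * c l) ^ 2 := by
        rw [Finset.mul_sum]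
        exact Finset.sum_le_sum fun l hl => key l (Finset.ne_of_mem_erase hl)
      have h6 : ∑ l ∈ Finset.univ.erase j, ((lamhat l - lam i) * c l) ^ 2 ≤ ε ^ 2 := by
        refine le_trans (Finset.sum_le_sum_of_subset_of_nonneg (Finset.subset_univ _)
          (fun l _ _ => sq_nonneg _)) sumr
      have hγ2 : 0 < (γ / 4) ^ 2 := by positivity
      have hε2 : ε ^ 2 = ErrT ^ 2 * γ ^ 2 := by rw [← hεE]; ring
      nlinarith [Finset.sum_nonneg (fun l (_ : l ∈ Finset.univ.erase j) => sq_nonneg (c l))]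
    have hsplit : ∑ l ∈ Finset.univ.erase j, c l ^ 2 + c j ^ 2 = ∑ l, c l ^ 2 :=
      Finset.sum_erase_add _ _ (Finset.mem_univ j)
    have hcj2 : 1 - 16 * ErrT ^ 2 ≤ c j ^ 2 := by
      rw [sumc] at hsplit
      linarith
    have hcj1 : c j ^ 2 ≤ 1 := by
      nlinarith [Finset.sum_nonneg (fun l (_ : l ∈ Finset.univ.erase j) => sq_nonneg (c l)),
        hsplit, sumc]
    set s0 : ℝ := if 0 ≤ v i ⬝ᵥ vhat j then (1 : ℝ) else -1 with hs0def
    have hcjs : c j = v i ⬝ᵥ vhat j := rfl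
    have hs0 : s0 * c j = |c j| := by
      rw [hs0def, hcjs]
      split
      · rw [one_mul, abs_of_nonneg (by assumption)]
      · rw [neg_one_mul, abs_of_neg (by linarith [not_le.mp (by assumption)])]
    have hs2 : s0 ^ 2 = 1 := by
      rw [hs0def]; split <;> norm_num
    have habs_cj : c j ^ 2 ≤ |c j| := by
      nlinarith [abs_nonneg (c j), sq_abs (c j)]
    have hnorm2 : ∑ t, (v i t - s0 * vhat j t) ^ 2 = 2 - 2 * (s0 * c j) := by
      have hvv : ∑ t, v i t ^ 2 = 1 := by
        have h2 := hv_orth i i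
        simp only [if_pos rfl, dotProduct] at h2
        simpa [sq] using h2
      have hww : ∑ t, vhat j t ^ 2 = 1 := by
        have h2 := hvhat_orth j j
        simp only [if_pos rfl, dotProduct] at h2
        simpa [sq] using h2
      have hvw : ∑ t, v i t * vhat j t = c j := rfl
      calc ∑ t, (v i t - s0 * vhat j t) ^ 2
          = ∑ t, (v i t ^ 2 + s0 ^ 2 * vhat j t ^ 2 - 2 * s0 * (v i t * vhat j t)) := by
            exact Finset.sum_congr rfl fun t _ => by ring
        _ = (∑ t, v i t ^ 2) + s0 ^ 2 * (∑ t, vhat j t ^ 2)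
              - 2 * s0 * ∑ t, v i t * vhat j t := by
            rw [Finset.sum_sub_distrib, Finset.sum_add_distrib, ← Finset.mul_sum,
              ← Finset.mul_sum]
        _ = 2 - 2 * (s0 * c j) := by rw [hvv, hww, hvw, hs2]; ring
    clear_value s0 j c r
    clear hs0def
    have hfinal : ∑ t, (v i t - s0 * vhat j t) ^ 2 ≤ 32 * ErrT ^ 2 := by
      rw [hnorm2, hs0]
      linarith only [habs_cj, hcj2]
    have : l2norm (v i - s0 • vhat j) ≤ Real.sqrt (32 * ErrT ^ 2) := by
      rw [l2norm]
      apply Real.sqrt_le_sqrt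
      simpa [Pi.sub_apply, Pi.smul_apply, smul_eq_mul] using hfinal
    calc l2norm (v i - s0 • vhat j) ≤ Real.sqrt (32 * ErrT ^ 2) := this
      _ = 4 * Real.sqrt 2 * ErrT := by
          rw [show (32 : ℝ) * ErrT ^ 2 = (4 * ErrT) ^ 2 * 2 by ring,
            Real.sqrt_mul (sq_nonneg _), Real.sqrt_sq (by linarith)]
          ring
  case _ =>
    intro i
    simp only [Equiv.trans_apply]
    have h := habs (σ.symm i)
    rw [Equiv.apply_symm_apply] at h
    rw [hεE]
    exact h
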